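/- arXiv:2104.06531 — 4 statements merged into one kernel-verified Lean document; each statement's English description precedes it below -/
import Mathlib

section
/- If real numbers δ_{k+1},...,δ_n satisfy |δ_j| ≤ u with 0 ≤ u < 1, then |Π_{j=k+1}^n (1+δ_j) - 1| ≤ exp((|Σ_{j=k+1}^n δ_j| + (n-k)u²)/(1-u)) - 1. -/
theorem product_perturbation_bound
    (n k : ℕ) (hk : k ≤ n) (u : ℝ) (hu0 : 0 ≤ u) (hu1 : u < 1)
    (δ : ℕ → ℝ) (hδ : ∀ j ∈ Finset.Icc (k + 1) n, |δ j| ≤ u) :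
    |(∏ j ∈ Finset.Icc (k + 1) n, (1 + δ j)) - 1| ≤
      Real.exp ((|∑ j ∈ Finset.Icc (k + 1) n, δ j| + ((n : ℝ) - k) * u ^ 2) / (1 - u)) - 1 := by
  have hu : 0 < 1 - u := by linarith
  set s := Finset.Icc (k + 1) n with hs
  have hpos : ∀ j ∈ s, 0 < 1 + δ j := by
    intro j hj
    have := abs_le.1 (hδ j hj)
    linarith [this.1]
  have hprod : (∏ j ∈ s, (1 + δ j)) = Real.exp (∑ j ∈ s, Real.log (1 + δ j)) := by
    rw [Real.exp_sum]
    exact Finset.prod_congr rfl fun j hj => (Real.exp_log (hpos j hj)).symm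
  have hlog : ∀ j ∈ s, |Real.log (1 + δ j) - δ j| ≤ u ^ 2 / (1 - u) := by
    intro j hj
    have habs := hδ j hj
    have h1 : |(-δ j)| < 1 := by rw [abs_neg]; exact lt_of_le_of_lt habs hu1
    have h2 := Real.abs_log_sub_add_sum_range_le h1 1
    simp only [Finset.sum_range_one, pow_one, Nat.cast_zero, zero_add, div_one, abs_neg,
      sub_neg_eq_add] at h2
    have e1 : Real.log (1 + δ j) - δ j = -δ j + Real.log (1 + δ j) := by ring
    rw [e1]
    refine h2.trans ?_
    have hd1 : 0 < 1 - |δ j| := by linarith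
    rw [show (1:ℕ)+1 = 2 from rfl]
    gcongr
  rw [hprod]
  set S := ∑ j ∈ s, Real.log (1 + δ j) with hS
  set T := ∑ j ∈ s, δ j with hT
  have hcard : (s.card : ℝ) = (n : ℝ) - k := by
    rw [hs, Nat.card_Icc]
    have h : n + 1 - (k + 1) = n - k := by omega
    rw [h, Nat.cast_sub hk]
  have hST : |S - T| ≤ ((n : ℝ) - k) * (u ^ 2 / (1 - u)) := by
    rw [← hcard]
    calc |S - T| = |∑ j ∈ s, (Real.log (1 + δ j) - δ j)| := by
          rw [Finset.sum_sub_distrib]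
      _ ≤ ∑ j ∈ s, |Real.log (1 + δ j) - δ j| := Finset.abs_sum_le_sum_abs _ _
      _ ≤ ∑ j ∈ s, u ^ 2 / (1 - u) := Finset.sum_le_sum hlog
      _ = s.card * (u ^ 2 / (1 - u)) := by rw [Finset.sum_const, nsmul_eq_mul]
  have hnk : (0 : ℝ) ≤ (n : ℝ) - k := by
    have : (k : ℝ) ≤ (n : ℝ) := Nat.cast_le.mpr hk
    linarith
  have hSbound : |S| ≤ (|T| + ((n : ℝ) - k) * u ^ 2) / (1 - u) := by
    have h1 : |S| ≤ |T| + |S - T| := by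
      have heq : S = T + (S - T) := by ring
      calc |S| = |T + (S - T)| := by rw [← heq]
        _ ≤ |T| + |S - T| := abs_add_le _ _
    have h2 : |T| ≤ |T| / (1 - u) := by
      rw [le_div_iff₀ hu]
      nlinarith [abs_nonneg T]
    have h3 : ((n : ℝ) - k) * (u ^ 2 / (1 - u)) = ((n : ℝ) - k) * u ^ 2 / (1 - u) := by ring
    calc |S| ≤ |T| + ((n : ℝ) - k) * (u ^ 2 / (1 - u)) := by linarith
      _ ≤ |T| / (1 - u) + ((n : ℝ) - k) * u ^ 2 / (1 - u) := by rw [h3]; linarith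
      _ = (|T| + ((n : ℝ) - k) * u ^ 2) / (1 - u) := by ring
  calc |Real.exp S - 1| ≤ Real.exp |S| - 1 := by
        rcases le_or_gt 0 S with h | h
        · rw [abs_of_nonneg h, abs_of_nonneg (by linarith [Real.one_le_exp h])]
        · rw [abs_of_neg h, abs_of_neg (by linarith [Real.exp_lt_one_iff.mpr h])]
          have e1 := Real.add_one_le_exp S
          have e2 := Real.add_one_le_exp (-S)
          linarith
    _ ≤ Real.exp ((|T| + ((n : ℝ) - k) * u ^ 2) / (1 - u)) - 1 := by
        have := Real.exp_le_exp.mpr hSbound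
        linarith
end

section
/- Define S_k^{(j)} for k ≥ 1, j ≥ 1 by S_1^{(j)} = 0, S_k^{(1)} = S_{k-1}^{(1)} + δ_k s_k, and S_k^{(j)} = S_{k-1}^{(j)} + δ_k S_{k-1}^{(j-1)} for j > 1. Then the forward error from recursive summation satisfies E_n = Σ_{j=1}^{n-1} S_n^{(j)}. -/
theorem error_order_decomposition
    (n : ℕ) (hn : 1 ≤ n)
    (δ s : ℕ → ℝ) (E : ℕ → ℝ) (S : ℕ → ℕ → ℝ)
    (hE1 : E 1 = 0)
    (hE : ∀ k, 2 ≤ k → E k = E (k - 1) * (1 + δ k) + δ k * s k)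
    (hS1 : ∀ j, 1 ≤ j → S 1 j = 0)
    (hSfirst : ∀ k, 2 ≤ k → S k 1 = S (k - 1) 1 + δ k * s k)
    (hShigh : ∀ k, 2 ≤ k → ∀ j, 2 ≤ j → S k j = S (k - 1) j + δ k * S (k - 1) (j - 1)) :
    E n = ∑ j ∈ Finset.Icc 1 (n - 1), S n j := by
  -- auxiliary: S k j = 0 for 1 ≤ j, k ≤ j
  have hzero : ∀ k, 1 ≤ k → ∀ j, 1 ≤ j → k ≤ j → S k j = 0 := by
    intro k hk
    induction k, hk using Nat.le_induction with
    | base => intro j hj _; exact hS1 j hj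
    | succ k hk ih =>
      intro j hj hkj
      have hj2 : 2 ≤ j := le_trans (by omega) hkj
      rw [hShigh (k+1) (by omega) j hj2]
      simp only [Nat.add_sub_cancel]
      rw [ih j hj (by omega), ih (j-1) (by omega) (by omega)]
      ring
  induction n, hn using Nat.le_induction with
  | base => simpa using hE1
  | succ n hn ih =>
    have hE' := hE (n+1) (by omega)
    simp only [Nat.add_sub_cancel] at hE' ⊢
    rw [hE', ih]
    -- split off j = 1
    have hicc : Finset.Icc 1 n = insert 1 (Finset.Icc 2 n) := by
      rw [← Finset.insert_erase (Finset.mem_Icc.mpr ⟨le_refl 1, hn⟩), Finset.Icc_erase_left]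
      rfl
    rw [hicc, Finset.sum_insert (by simp)]
    rw [hSfirst (n+1) (by omega)]
    simp only [Nat.add_sub_cancel]
    have hsum : ∑ j ∈ Finset.Icc 2 n, S (n+1) j
        = ∑ j ∈ Finset.Icc 2 n, (S n j + δ (n+1) * S n (j-1)) := by
      apply Finset.sum_congr rfl
      intro j hj
      have hj2 : 2 ≤ j := (Finset.mem_Icc.mp hj).1
      rw [hShigh (n+1) (by omega) j hj2]
      simp
    rw [hsum, Finset.sum_add_distrib, ← Finset.mul_sum]
    have hshift : ∑ j ∈ Finset.Icc 2 n, S n (j-1) = ∑ j ∈ Finset.Icc 1 (n-1), S n j := by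
      rw [show (2:ℕ) = 1 + 1 from rfl, show n = (n-1) + 1 by omega,
        ← Finset.map_add_right_Icc, Finset.sum_map]
      simp
    rw [hshift]
    have hext : ∑ j ∈ Finset.Icc 1 n, S n j = ∑ j ∈ Finset.Icc 1 (n-1), S n j := by
      have h := Finset.sum_Icc_succ_top (show 1 ≤ (n-1)+1 by omega) (S n)
      rw [show (n-1)+1 = n by omega] at h
      rw [h, hzero n hn n hn le_rfl]
      ring
    have hins : S n 1 + ∑ j ∈ Finset.Icc 2 n, S n j = ∑ j ∈ Finset.Icc 1 n, S n j := by
      rw [hicc, Finset.sum_insert (by simp)]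
    rw [← hext]
    linarith [hins]
end

section
/- Let δ_2,...,δ_n be independent mean-zero random variables with |δ_k| ≤ u, and let s_2,...,s_n be real constants. Define Z_k = Σ_{j=n-k+1}^n s_j δ_j Π_{ℓ=j+1}^n (1+δ_ℓ) for k = 1,...,n-1 (sums in reverse index order). Then Z_1,...,Z_{n-1} is a martingale with respect to the reversed sequence δ_n, δ_{n-1},...,δ_2. -/
open MeasureTheory Finset

theorem reversed_error_process_is_martingale
    {Ω : Type*} {m : MeasurableSpace Ω} (μ : Measure Ω) [IsProbabilityMeasure μ]
    (n : ℕ) (hn : 2 ≤ n) (u : ℝ) (hu : 0 ≤ u)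
    (δ : ℕ → Ω → ℝ) (s : ℕ → ℝ)
    (hmeas : ∀ k, StronglyMeasurable (δ k))
    (hindep : ProbabilityTheory.iIndepFun δ μ)
    (hmean : ∀ k, 2 ≤ k → k ≤ n → ∫ ω, δ k ω ∂μ = 0)
    (hbdd : ∀ k, 2 ≤ k → k ≤ n → ∀ᵐ ω ∂μ, |δ k ω| ≤ u)
    -- the reversed sequence ε k = δ (n + 1 - k), so that ε 1 = δ n, ..., ε (n-1) = δ 2
    (ε : ℕ → Ω → ℝ) (hε : ∀ k, ε k = δ (n + 1 - k))
    -- Z k = ∑_{j = n-k+1}^{n} s j * δ j * ∏_{ℓ = j+1}^{n} (1 + δ ℓ)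
    (Z : ℕ → Ω → ℝ)
    (hZ : ∀ k ω, Z k ω =
      ∑ j ∈ Finset.Icc (n - k + 1) n, s j * δ j ω * ∏ ℓ ∈ Finset.Icc (j + 1) n, (1 + δ ℓ ω)) :
    (∀ k, 1 ≤ k → k ≤ n - 1 →
        StronglyMeasurable[(Filtration.natural ε (fun k => (hε k ▸ hmeas (n + 1 - k)))) k] (Z k)) ∧
      (∀ k, 1 ≤ k → k + 1 ≤ n - 1 →
        μ[Z (k + 1) | (Filtration.natural ε (fun k => (hε k ▸ hmeas (n + 1 - k)))) k]
          =ᵐ[μ] Z k) := by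
  classical
  set F := Filtration.natural ε (fun k => (hε k ▸ hmeas (n + 1 - k))) with hF
  -- δ j is F k measurable for n - k + 1 ≤ j ≤ n
  have hδε : ∀ j, 1 ≤ j → j ≤ n → δ j = ε (n + 1 - j) := by
    intro j h1 h2
    have h3 : n + 1 - (n + 1 - j) = j := by omega
    rw [hε, h3]
  have hδmeas : ∀ k j, n - k + 1 ≤ j → j ≤ n → StronglyMeasurable[F k] (δ j) := by
    intro k j hj1 hj2
    rw [hδε j (by omega) hj2]
    exact ((Filtration.stronglyAdapted_natural _) (n + 1 - j)).mono (F.mono (by omega))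
  have hterm_meas : ∀ k j, n - k + 1 ≤ j → j ≤ n →
      StronglyMeasurable[F k] (fun ω => s j * δ j ω * ∏ ℓ ∈ Icc (j + 1) n, (1 + δ ℓ ω)) := by
    intro k j hj1 hj2
    refine (stronglyMeasurable_const.mul (hδmeas k j hj1 hj2)).mul
      (Finset.stronglyMeasurable_fun_prod _ fun ℓ hℓ => ?_)
    simp only [mem_Icc] at hℓ
    exact stronglyMeasurable_const.add (hδmeas k ℓ (by omega) hℓ.2)
  have hZmeas : ∀ k, StronglyMeasurable[F k] (Z k) := by
    intro k
    rw [show Z k = fun ω => ∑ j ∈ Icc (n - k + 1) n,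
        s j * δ j ω * ∏ ℓ ∈ Icc (j + 1) n, (1 + δ ℓ ω) from funext (hZ k)]
    refine Finset.stronglyMeasurable_fun_sum _ fun j hj => ?_
    simp only [mem_Icc] at hj
    exact hterm_meas k j hj.1 hj.2
  -- a.e. bound on all the δ's simultaneously
  have hbddall : ∀ᵐ ω ∂μ, ∀ j ∈ Icc 2 n, |δ j ω| ≤ u := by
    rw [Filter.eventually_all_finset]
    intro j hj
    simp only [mem_Icc] at hj
    exact hbdd j hj.1 hj.2
  have hprod_bdd : ∀ (a : Finset ℕ), a ⊆ Icc 2 n → ∀ ω : Ω, (∀ j ∈ Icc 2 n, |δ j ω| ≤ u) →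
      |∏ ℓ ∈ a, (1 + δ ℓ ω)| ≤ (1 + u) ^ n := by
    intro a ha ω hω
    calc |∏ ℓ ∈ a, (1 + δ ℓ ω)| = ∏ ℓ ∈ a, |1 + δ ℓ ω| := Finset.abs_prod _ _
      _ ≤ ∏ ℓ ∈ a, (1 + u) := by
          refine Finset.prod_le_prod (fun ℓ _ => abs_nonneg _) fun ℓ hℓ => ?_
          calc |1 + δ ℓ ω| ≤ |(1:ℝ)| + |δ ℓ ω| := abs_add_le _ _
            _ ≤ 1 + u := by
                have := hω ℓ (ha hℓ)
                simp only [abs_one]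
                linarith
      _ = (1 + u) ^ a.card := by rw [Finset.prod_const]
      _ ≤ (1 + u) ^ n := by
          refine pow_le_pow_right₀ (by linarith) ?_
          calc a.card ≤ (Icc 2 n).card := Finset.card_le_card ha
            _ ≤ n := by rw [Nat.card_Icc]; omega
  have hint_term : ∀ j, 2 ≤ j → j ≤ n →
      Integrable (fun ω => s j * δ j ω * ∏ ℓ ∈ Icc (j + 1) n, (1 + δ ℓ ω)) μ := by
    intro j h2 hjn
    refine ⟨((hterm_meas n j (by omega) hjn).mono (F.le n)).aestronglyMeasurable, ?_⟩
    refine HasFiniteIntegral.of_bounded (C := |s j| * u * (1 + u) ^ n) ?_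
    filter_upwards [hbddall] with ω hω
    have h1 : Icc (j + 1) n ⊆ Icc 2 n := by
      intro x hx
      simp only [mem_Icc] at hx ⊢
      omega
    calc ‖s j * δ j ω * ∏ ℓ ∈ Icc (j + 1) n, (1 + δ ℓ ω)‖
        = |s j| * |δ j ω| * |∏ ℓ ∈ Icc (j + 1) n, (1 + δ ℓ ω)| := by
          rw [Real.norm_eq_abs, abs_mul, abs_mul]
      _ ≤ |s j| * u * (1 + u) ^ n := by
          have h3 := hω j (by simp only [mem_Icc]; omega)
          have h4 := hprod_bdd _ h1 ω hω
          have h5 : (0:ℝ) ≤ |s j| := abs_nonneg _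
          have h6 : (0:ℝ) ≤ |δ j ω| := abs_nonneg _
          have h7 : (0:ℝ) ≤ |∏ ℓ ∈ Icc (j + 1) n, (1 + δ ℓ ω)| := abs_nonneg _
          exact mul_le_mul (mul_le_mul_of_nonneg_left h3 h5) h4 h7 (by positivity)
  have hZint : ∀ k, k ≤ n - 1 → Integrable (Z k) μ := by
    intro k hk
    rw [show Z k = fun ω => ∑ j ∈ Icc (n - k + 1) n,
        s j * δ j ω * ∏ ℓ ∈ Icc (j + 1) n, (1 + δ ℓ ω) from funext (hZ k)]
    refine integrable_finset_sum _ fun j hj => ?_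
    simp only [mem_Icc] at hj
    exact hint_term j (by omega) hj.2
  refine ⟨fun k _ _ => hZmeas k, fun k hk1 hk2 => ?_⟩
  -- the martingale step
  set j0 := n - k with hj0
  have hj02 : 2 ≤ j0 := by omega
  have hj0n : j0 ≤ n := by omega
  -- independence: comap (δ j0) is independent of F k
  have hindep' : ProbabilityTheory.Indep
      (MeasurableSpace.comap (δ j0) inferInstance) (F k) μ := by
    have h := ProbabilityTheory.indep_biSup_compl
      (fun i => (hmeas i).measurable.comap_le) hindep {j0}
    simp only [Set.mem_singleton_iff, iSup_iSup_eq_left] at h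
    refine ProbabilityTheory.indep_of_indep_of_le_right h ?_
    refine iSup₂_le fun i hi => ?_
    rw [hε i]
    have hne : n + 1 - i ∈ ({j0}ᶜ : Set ℕ) := by
      simp only [Set.mem_compl_iff, Set.mem_singleton_iff]
      omega
    exact le_iSup₂ (f := fun i (_ : i ∈ ({j0}ᶜ : Set ℕ)) =>
      MeasurableSpace.comap (δ i) inferInstance) (n + 1 - i) hne
  have hcond0 : μ[δ j0 | F k] =ᵐ[μ] fun _ => 0 := by
    have h := condExp_indep_eq (μ := μ) (hmeas j0).measurable.comap_le (F.le k)
      (stronglyMeasurable_iff_measurable.2 (Measurable.of_comap_le le_rfl)) hindep'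
    refine h.trans ?_
    rw [hmean j0 hj02 hj0n]
  -- split Z (k+1)
  have hsplit : Z (k + 1) = (fun ω =>
      (s j0 * ∏ ℓ ∈ Icc (j0 + 1) n, (1 + δ ℓ ω)) * δ j0 ω) + Z k := by
    funext ω
    simp only [Pi.add_apply]
    rw [hZ, hZ]
    have h1 : n - (k + 1) + 1 = j0 := by omega
    rw [h1, ← Finset.Ioc_insert_left hj0n, Finset.sum_insert Finset.left_notMem_Ioc]
    have h2 : Finset.Ioc j0 n = Finset.Icc (n - k + 1) n := by
      rw [← Finset.Icc_add_one_left_eq_Ioc]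
    rw [h2]
    ring
  have hg_meas : StronglyMeasurable[F k]
      (fun ω => s j0 * ∏ ℓ ∈ Icc (j0 + 1) n, (1 + δ ℓ ω)) := by
    refine stronglyMeasurable_const.mul (Finset.stronglyMeasurable_fun_prod _ fun ℓ hℓ => ?_)
    simp only [mem_Icc] at hℓ
    exact stronglyMeasurable_const.add (hδmeas k ℓ (by omega) hℓ.2)
  have hgf_int : Integrable (fun ω =>
      (s j0 * ∏ ℓ ∈ Icc (j0 + 1) n, (1 + δ ℓ ω)) * δ j0 ω) μ := by
    have := hint_term j0 hj02 hj0n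
    refine this.congr (Filter.Eventually.of_forall fun ω => ?_)
    ring
  have hf_int : Integrable (δ j0) μ := by
    refine ⟨(hmeas j0).aestronglyMeasurable, HasFiniteIntegral.of_bounded (C := u) ?_⟩
    filter_upwards [hbdd j0 hj02 hj0n] with ω hω
    simpa [Real.norm_eq_abs] using hω
  calc μ[Z (k + 1) | F k]
      =ᵐ[μ] μ[(fun ω => (s j0 * ∏ ℓ ∈ Icc (j0 + 1) n, (1 + δ ℓ ω)) * δ j0 ω) | F k]
        + μ[Z k | F k] := by rw [hsplit]; exact condExp_add hgf_int (hZint k (by omega)) _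
    _ =ᵐ[μ] (fun ω => s j0 * ∏ ℓ ∈ Icc (j0 + 1) n, (1 + δ ℓ ω)) * μ[δ j0 | F k]
        + Z k := by
          refine Filter.EventuallyEq.add ?_ ?_
          · exact condExp_mul_of_stronglyMeasurable_left hg_meas hgf_int hf_int
          · rw [condExp_of_stronglyMeasurable (F.le k) (hZmeas k) (hZint k (by omega))]
    _ =ᵐ[μ] Z k := by
          filter_upwards [hcond0] with ω hω
          simp only [Pi.add_apply, Pi.mul_apply, hω, mul_zero, zero_add]
end

section
/- Let 0 ≤ u < 1 and |δ_j| ≤ u for j = k+1,...,n. If additionally |Σ_{j=k+1}^n δ_j| ≤ λ√n u for some λ ≥ 0, then |Π_{j=k+1}^n (1+δ_j) - 1| ≤ exp((λ√n u + n u²)/(1-u)) - 1. -/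
theorem product_perturbation_bound_with_sum_bound
    (n k : ℕ) (hk : k ≤ n) (u lam : ℝ) (hu0 : 0 ≤ u) (hu1 : u < 1) (hlam : 0 ≤ lam)
    (δ : ℕ → ℝ) (hδ : ∀ j ∈ Finset.Icc (k + 1) n, |δ j| ≤ u)
    (hsum : |∑ j ∈ Finset.Icc (k + 1) n, δ j| ≤ lam * Real.sqrt n * u) :
    |(∏ j ∈ Finset.Icc (k + 1) n, (1 + δ j)) - 1| ≤
      Real.exp ((lam * Real.sqrt n * u + n * u ^ 2) / (1 - u)) - 1 := by
  set F := Finset.Icc (k + 1) n with hF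
  have hu : 0 < 1 - u := by linarith
  have hpos : ∀ j ∈ F, 0 < 1 + δ j := by
    intro j hj
    have := (abs_le.mp (hδ j hj)).1
    linarith
  have hprod : ∏ j ∈ F, (1 + δ j) = Real.exp (∑ j ∈ F, Real.log (1 + δ j)) := by
    rw [Real.exp_sum]
    exact Finset.prod_congr rfl fun j hj => (Real.exp_log (hpos j hj)).symm
  set S := ∑ j ∈ F, Real.log (1 + δ j) with hSdef
  have hlog : ∀ j ∈ F, |Real.log (1 + δ j) - δ j| ≤ (δ j) ^ 2 / (1 - u) := by
    intro j hj
    have habs : |(-δ j)| < 1 := by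
      rw [abs_neg]; exact lt_of_le_of_lt (hδ j hj) hu1
    have h := Real.abs_log_sub_add_sum_range_le habs 1
    simp only [Finset.range_one, Finset.sum_singleton, pow_one] at h
    norm_num at h
    have h' : |Real.log (1 + δ j) - δ j| ≤ (δ j) ^ 2 / (1 - |δ j|) := by
      have e2 : Real.log (1 + δ j) - δ j = -δ j + Real.log (1 + δ j) := by ring
      rw [e2]; exact h
    refine h'.trans ?_
    apply div_le_div_of_nonneg_left (sq_nonneg _) hu
    have := hδ j hj; linarith
  have hcard : (F.card : ℝ) ≤ (n : ℝ) := by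
    have : F.card ≤ n := by
      rw [hF, Nat.card_Icc]; omega
    exact_mod_cast this
  have hsq : ∑ j ∈ F, (δ j) ^ 2 ≤ (n : ℝ) * u ^ 2 := by
    calc ∑ j ∈ F, (δ j) ^ 2 ≤ ∑ j ∈ F, u ^ 2 := by
          apply Finset.sum_le_sum
          intro j hj
          have := hδ j hj
          calc (δ j) ^ 2 = |δ j| ^ 2 := (sq_abs _).symm
            _ ≤ u ^ 2 := by apply pow_le_pow_left₀ (abs_nonneg _) this
      _ = F.card * u ^ 2 := by rw [Finset.sum_const, nsmul_eq_mul]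
      _ ≤ (n : ℝ) * u ^ 2 := by apply mul_le_mul_of_nonneg_right hcard (sq_nonneg _)
  have hS : |S| ≤ (lam * Real.sqrt n * u + n * u ^ 2) / (1 - u) := by
    have h1 : |S - ∑ j ∈ F, δ j| ≤ ((n : ℝ) * u ^ 2) / (1 - u) := by
      rw [hSdef, ← Finset.sum_sub_distrib]
      calc |∑ j ∈ F, (Real.log (1 + δ j) - δ j)| ≤ ∑ j ∈ F, |Real.log (1 + δ j) - δ j| :=
            Finset.abs_sum_le_sum_abs _ _
        _ ≤ ∑ j ∈ F, (δ j) ^ 2 / (1 - u) := Finset.sum_le_sum hlog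
        _ = (∑ j ∈ F, (δ j) ^ 2) / (1 - u) := by rw [Finset.sum_div]
        _ ≤ ((n : ℝ) * u ^ 2) / (1 - u) := by apply div_le_div_of_nonneg_right hsq hu.le
    have h2 : |S| ≤ |S - ∑ j ∈ F, δ j| + |∑ j ∈ F, δ j| := by
      calc |S| = |(S - ∑ j ∈ F, δ j) + ∑ j ∈ F, δ j| := by ring_nf
        _ ≤ _ := abs_add_le _ _
    have h3 : lam * Real.sqrt n * u ≤ lam * Real.sqrt n * u / (1 - u) := by
      rw [le_div_iff₀ hu]
      have hnn : 0 ≤ lam * Real.sqrt n * u := by positivity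
      nlinarith
    calc |S| ≤ ((n : ℝ) * u ^ 2) / (1 - u) + lam * Real.sqrt n * u := by linarith
      _ ≤ ((n : ℝ) * u ^ 2) / (1 - u) + lam * Real.sqrt n * u / (1 - u) := by linarith
      _ = (lam * Real.sqrt n * u + n * u ^ 2) / (1 - u) := by ring
  rw [hprod]
  set B := (lam * Real.sqrt n * u + n * u ^ 2) / (1 - u) with hB
  have hSB : S ≤ B := (le_abs_self S).trans hS
  have hSB' : -B ≤ S := by
    have := (neg_abs_le S); linarith
  rcases le_or_gt 1 (Real.exp S) with h | h
  · rw [abs_of_nonneg (by linarith)]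
    have := Real.exp_le_exp.mpr hSB
    linarith
  · rw [abs_of_neg (by linarith)]
    have h1 : Real.exp (-B) ≤ Real.exp S := Real.exp_le_exp.mpr hSB'
    have h2 : Real.exp (-B) * Real.exp B = 1 := by
      rw [← Real.exp_add]; simp
    have h3 : 0 < Real.exp B := Real.exp_pos B
    have h4 : 0 < Real.exp (-B) := Real.exp_pos _
    nlinarith [sq_nonneg (Real.exp B - 1)]
end
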